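/- arXiv:2208.13733 — 5 statements merged into one kernel-verified Lean document; each statement's English description precedes it below -/
import Mathlib

section
/- If X is a random variable with density f_X(x) = π/(2·cosh²(πx)) on ℝ, then its characteristic function is E(e^{iθX}) = (θ/2)/sinh(θ/2) for all real θ ≠ 0 (and equals 1 at θ = 0). -/
open MeasureTheory Complex
open scoped Real

noncomputable def sigm (t : ℝ) : ℝ := Real.exp (2 * π * t) / (1 + Real.exp (2 * π * t))

lemma one_add_exp_pos (t : ℝ) : 0 < 1 + Real.exp (2 * π * t) := by positivity

lemma sigm_mem (t : ℝ) : sigm t ∈ Set.Ioo (0 : ℝ) 1 := by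
  constructor
  · exact div_pos (Real.exp_pos _) (one_add_exp_pos t)
  · rw [sigm, div_lt_one (one_add_exp_pos t)]
    linarith [Real.exp_pos (2 * π * t)]

lemma one_sub_sigm (t : ℝ) : 1 - sigm t = 1 / (1 + Real.exp (2 * π * t)) := by
  rw [sigm]
  field_simp
  ring

lemma sigm_hasDerivAt (t : ℝ) :
    HasDerivAt sigm (π / (2 * Real.cosh (π * t) ^ 2)) t := by
  have he : HasDerivAt (fun t : ℝ => Real.exp (2 * π * t))
      (Real.exp (2 * π * t) * (2 * π * 1)) t :=
    ((hasDerivAt_id t).const_mul (2 * π)).exp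
  have hden : HasDerivAt (fun t : ℝ => 1 + Real.exp (2 * π * t))
      (Real.exp (2 * π * t) * (2 * π * 1)) t := he.const_add 1
  have h := he.div hden (one_add_exp_pos t).ne'
  refine h.congr_deriv ?_
  have hp : (0 : ℝ) < Real.exp (π * t) := Real.exp_pos _
  have h2 : Real.exp (2 * π * t) = Real.exp (π * t) ^ 2 := by
    rw [sq, ← Real.exp_add]; ring_nf
  have hc : Real.cosh (π * t) = (Real.exp (π * t) + (Real.exp (π * t))⁻¹) / 2 := by
    rw [Real.cosh_eq, Real.exp_neg]
  rw [hc, h2]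
  have h1 : (0 : ℝ) < 1 + Real.exp (π * t) ^ 2 := by positivity
  field_simp
  ring

lemma sigm_injective : Function.Injective sigm := by
  intro a b h
  have ha := one_add_exp_pos a
  have hb := one_add_exp_pos b
  rw [sigm, sigm, div_eq_div_iff ha.ne' hb.ne'] at h
  have h2 : Real.exp (2 * π * a) = Real.exp (2 * π * b) := by nlinarith
  have h3 := Real.exp_injective h2
  have hπ : (2 * π : ℝ) ≠ 0 := by positivity
  exact mul_left_cancel₀ hπ h3

lemma sigm_image : sigm '' Set.univ = Set.Ioo (0 : ℝ) 1 := by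
  rw [Set.image_univ]
  ext y
  simp only [Set.mem_range]
  constructor
  · rintro ⟨t, rfl⟩; exact sigm_mem t
  · rintro ⟨h0, h1⟩
    have h2 : (0 : ℝ) < 1 - y := by linarith
    refine ⟨Real.log (y / (1 - y)) / (2 * π), ?_⟩
    have hπ : (2 * π : ℝ) ≠ 0 := by positivity
    have he : Real.exp (2 * π * (Real.log (y / (1 - y)) / (2 * π))) = y / (1 - y) := by
      rw [mul_div_cancel₀ _ hπ]
      exact Real.exp_log (div_pos h0 h2)
    rw [sigm, he]
    field_simp
    ring

lemma key (θ : ℝ) :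
    (∫ x : ℝ, Complex.exp ((θ : ℂ) * x * Complex.I) *
        ((π / (2 * Real.cosh (π * x) ^ 2) : ℝ) : ℂ)) =
      Complex.betaIntegral (1 + ((θ / (2 * π) : ℝ) : ℂ) * Complex.I)
        (1 - ((θ / (2 * π) : ℝ) : ℂ) * Complex.I) := by
  have hπ : (π : ℝ) ≠ 0 := Real.pi_ne_zero
  rw [Complex.betaIntegral, intervalIntegral.integral_of_le zero_le_one,
    MeasureTheory.integral_Ioc_eq_integral_Ioo, ← sigm_image,
    integral_image_eq_integral_abs_deriv_smul MeasurableSet.univ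
      (fun x _ => (sigm_hasDerivAt x).hasDerivWithinAt) sigm_injective.injOn,
    Measure.restrict_univ]
  refine integral_congr_ae (Filter.Eventually.of_forall fun t => ?_)
  dsimp only
  obtain ⟨hs0, hs1⟩ := sigm_mem t
  have hd : (0 : ℝ) < π / (2 * Real.cosh (π * t) ^ 2) := by positivity
  rw [abs_of_pos hd, Complex.real_smul]
  have hexp : (1 + (θ / (2 * π) : ℝ) * Complex.I - 1 : ℂ) = (θ / (2 * π) : ℝ) * Complex.I := by
    ring
  have hexp2 : (1 - (θ / (2 * π) : ℝ) * Complex.I - 1 : ℂ) =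
      -((θ / (2 * π) : ℝ) * Complex.I) := by ring
  rw [hexp, hexp2]
  have h1s : (1 - (sigm t : ℂ)) = ((1 - sigm t : ℝ) : ℂ) := by push_cast; ring
  have hc1 : ((sigm t : ℂ)) ^ ((θ / (2 * π) : ℝ) * Complex.I) =
      Complex.exp ((Real.log (sigm t) : ℂ) * ((θ / (2 * π) : ℝ) * Complex.I)) := by
    rw [Complex.cpow_def_of_ne_zero (by exact_mod_cast hs0.ne'), Complex.ofReal_log hs0.le]
  have hc2 : (1 - (sigm t : ℂ)) ^ (-((θ / (2 * π) : ℝ) * Complex.I)) =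
      Complex.exp ((Real.log (1 - sigm t) : ℂ) * -((θ / (2 * π) : ℝ) * Complex.I)) := by
    rw [h1s, Complex.cpow_def_of_ne_zero
      (by exact_mod_cast (by linarith : (0:ℝ) < 1 - sigm t).ne'),
      Complex.ofReal_log (by linarith : (0:ℝ) ≤ 1 - sigm t)]
  rw [hc1, hc2, ← Complex.exp_add]
  have hlog : Real.log (sigm t) - Real.log (1 - sigm t) = 2 * π * t := by
    rw [one_sub_sigm, sigm, Real.log_div (Real.exp_pos _).ne' (one_add_exp_pos t).ne',
      Real.log_div one_ne_zero (one_add_exp_pos t).ne', Real.log_exp, Real.log_one]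
    ring
  have harg : (Real.log (sigm t) : ℂ) * ((θ / (2 * π) : ℝ) * Complex.I) +
      (Real.log (1 - sigm t) : ℂ) * -((θ / (2 * π) : ℝ) * Complex.I) =
      (θ : ℂ) * t * Complex.I := by
    have : ((Real.log (sigm t) - Real.log (1 - sigm t) : ℝ) : ℂ) = ((2 * π * t : ℝ) : ℂ) := by
      exact_mod_cast congrArg (fun x : ℝ => (x : ℂ)) hlog
    push_cast at this ⊢
    have hπc : (π : ℂ) ≠ 0 := by exact_mod_cast hπ
    field_simp
    linear_combination (θ : ℂ) * this
  rw [harg]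
  ring

theorem stmt_2 :
    (∀ θ : ℝ, θ ≠ 0 →
        (∫ x : ℝ, Complex.exp ((θ : ℂ) * x * Complex.I) *
            ((π / (2 * Real.cosh (π * x) ^ 2) : ℝ) : ℂ)) =
          (((θ / 2) / Real.sinh (θ / 2) : ℝ) : ℂ)) ∧
      (∫ x : ℝ, Complex.exp (((0 : ℝ) : ℂ) * x * Complex.I) *
          ((π / (2 * Real.cosh (π * x) ^ 2) : ℝ) : ℂ)) = 1 := by
  constructor
  · intro θ hθ
    rw [key θ]
    have hπ : (π : ℝ) ≠ 0 := Real.pi_ne_zero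
    set a : ℝ := θ / (2 * π) with ha_def
    have ha : a ≠ 0 := div_ne_zero hθ (by positivity)
    have haI : (a : ℂ) * Complex.I ≠ 0 :=
      mul_ne_zero (by exact_mod_cast ha) Complex.I_ne_zero
    have hre1 : 0 < ((1 : ℂ) + (a : ℂ) * Complex.I).re := by simp
    have hre2 : 0 < ((1 : ℂ) - (a : ℂ) * Complex.I).re := by simp
    have hB := Complex.Gamma_mul_Gamma_eq_betaIntegral hre1 hre2
    have hsum : (1 : ℂ) + (a : ℂ) * Complex.I + (1 - (a : ℂ) * Complex.I) = 2 := by ring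
    rw [hsum, (by norm_num : (2 : ℂ) = (1 : ℕ) + 1), Complex.Gamma_nat_eq_factorial] at hB
    simp only [Nat.factorial_one, Nat.cast_one, one_mul] at hB
    rw [← hB]
    have hG1 : Complex.Gamma (1 + (a : ℂ) * Complex.I) =
        ((a : ℂ) * Complex.I) * Complex.Gamma ((a : ℂ) * Complex.I) := by
      rw [add_comm, Complex.Gamma_add_one _ haI]
    rw [hG1, mul_assoc, Complex.Gamma_mul_Gamma_one_sub]
    have hsin : Complex.sin ((π : ℂ) * ((a : ℂ) * Complex.I)) =
        ((Real.sinh (θ / 2) : ℝ) : ℂ) * Complex.I := by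
      have h1 : (π : ℂ) * ((a : ℂ) * Complex.I) = ((π * a : ℝ) : ℂ) * Complex.I := by
        push_cast; ring
      have h2 : π * a = θ / 2 := by
        rw [ha_def]; field_simp
      rw [h1, h2, Complex.sin_mul_I, Complex.ofReal_sinh]
    rw [hsin]
    have hsh : Real.sinh (θ / 2) ≠ 0 := by
      intro h
      apply hθ
      have := Real.sinh_injective (h.trans Real.sinh_zero.symm)
      linarith
    have hshc : ((Real.sinh (θ / 2) : ℝ) : ℂ) ≠ 0 := by exact_mod_cast hsh
    have ha2 : π * a = θ / 2 := by rw [ha_def]; field_simp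
    have : ((2 : ℝ) * π : ℂ) ≠ 0 := by
      push_cast
      exact mul_ne_zero two_ne_zero (by exact_mod_cast hπ)
    push_cast [ha_def]
    have hπc : (π : ℂ) ≠ 0 := by exact_mod_cast hπ
    field_simp
  · rw [key 0]
    norm_num
    rw [Complex.betaIntegral_eval_one_right (by norm_num : 0 < (1 : ℂ).re)]
    norm_num
end

section
/- For real s > 1 and a ≥ 1, (s-1)·Γ(s)·ζ(s,a) = ∫₀^∞ x^{s-1} e^{-ax} [ax - 1 + e^{-x}(1 - (a-1)x)]/(1 - e^{-x})² dx. -/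
open MeasureTheory Set

theorem stmt_7 (s a : ℝ) (hs : 1 < s) (ha : 1 ≤ a) :
    (s - 1) * Real.Gamma s * (∑' n : ℕ, ((n : ℝ) + a) ^ (-s)) =
      ∫ x in Ioi (0 : ℝ),
        x ^ (s - 1) * Real.exp (-a * x) *
          (a * x - 1 + Real.exp (-x) * (1 - (a - 1) * x)) / (1 - Real.exp (-x)) ^ 2 := by
  have ha0 : 0 < a := lt_of_lt_of_le one_pos ha
  have hs0 : 0 < s := lt_trans one_pos hs
  have hb : ∀ n : ℕ, 0 < (n : ℝ) + a := fun n => by positivity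
  set F : ℕ → ℝ → ℝ := fun n x =>
    ((n : ℝ) + a) * (x ^ s * Real.exp (-(((n : ℝ) + a) * x)))
      - x ^ (s - 1) * Real.exp (-(((n : ℝ) + a) * x)) with hF
  -- integrability of the two pieces
  have int1 : ∀ n : ℕ, IntegrableOn (fun x : ℝ => x ^ s * Real.exp (-(((n : ℝ) + a) * x)))
      (Ioi 0) := by
    intro n
    have h := integrableOn_rpow_mul_exp_neg_mul_rpow (p := 1) (s := s) (b := (n : ℝ) + a)
      (by linarith) zero_lt_one (hb n)
    refine h.congr_fun (fun x hx => ?_) measurableSet_Ioi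
    dsimp only
    rw [Real.rpow_one, neg_mul]
  have int2 : ∀ n : ℕ, IntegrableOn (fun x : ℝ => x ^ (s - 1) * Real.exp (-(((n : ℝ) + a) * x)))
      (Ioi 0) := by
    intro n
    have h := integrableOn_rpow_mul_exp_neg_mul_rpow (p := 1) (s := s - 1) (b := (n : ℝ) + a)
      (by linarith) zero_lt_one (hb n)
    refine h.congr_fun (fun x hx => ?_) measurableSet_Ioi
    dsimp only
    rw [Real.rpow_one, neg_mul]
  have hFint : ∀ n : ℕ, IntegrableOn (F n) (Ioi 0) := fun n =>
    ((int1 n).const_mul _).sub (int2 n)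
  -- values of the two integrals
  have J1 : ∀ n : ℕ, (∫ x in Ioi (0 : ℝ), x ^ s * Real.exp (-(((n : ℝ) + a) * x)))
      = (1 / ((n : ℝ) + a)) ^ (s + 1) * Real.Gamma (s + 1) := by
    intro n
    have h := Real.integral_rpow_mul_exp_neg_mul_Ioi (a := s + 1) (r := (n : ℝ) + a)
      (by linarith) (hb n)
    simpa [add_sub_cancel_right] using h
  have J2 : ∀ n : ℕ, (∫ x in Ioi (0 : ℝ), x ^ (s - 1) * Real.exp (-(((n : ℝ) + a) * x)))
      = (1 / ((n : ℝ) + a)) ^ s * Real.Gamma s :=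
    fun n => Real.integral_rpow_mul_exp_neg_mul_Ioi hs0 (hb n)
  -- power simplifications
  have hpow1 : ∀ n : ℕ, ((n : ℝ) + a) * (1 / ((n : ℝ) + a)) ^ (s + 1) = ((n : ℝ) + a) ^ (-s) := by
    intro n
    rw [one_div, Real.inv_rpow (hb n).le, ← Real.rpow_neg (hb n).le]
    nth_rewrite 1 [← Real.rpow_one ((n : ℝ) + a)]
    rw [← Real.rpow_add (hb n)]
    norm_num
  have hpow2 : ∀ n : ℕ, (1 / ((n : ℝ) + a)) ^ s = ((n : ℝ) + a) ^ (-s) := by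
    intro n
    rw [one_div, Real.inv_rpow (hb n).le, ← Real.rpow_neg (hb n).le]
  -- the integral of each F n
  have hInt : ∀ n : ℕ, (∫ x in Ioi (0 : ℝ), F n x)
      = (s - 1) * Real.Gamma s * ((n : ℝ) + a) ^ (-s) := by
    intro n
    rw [hF]
    rw [integral_sub ((int1 n).const_mul _) (int2 n), integral_const_mul, J1 n, J2 n,
      ← mul_assoc, hpow1 n, hpow2 n, Real.Gamma_add_one hs0.ne']
    ring
  -- summability of the norms of the integrals
  have hsum0 : Summable (fun n : ℕ => ((n : ℝ) + a) ^ (-s)) := by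
    have h := (Real.summable_one_div_nat_add_rpow a s).mpr hs
    refine h.congr (fun n => ?_)
    rw [one_div, ← Real.rpow_neg (abs_nonneg _), abs_of_pos (hb n)]
  have hnormsum : Summable fun n : ℕ => ∫ x in Ioi (0 : ℝ), ‖F n x‖ := by
    have hmaj : Summable (fun n : ℕ => ((n : ℝ) + a) ^ (-s) * (s * Real.Gamma s + Real.Gamma s)) :=
      hsum0.mul_right _
    refine Summable.of_nonneg_of_le (fun n => integral_nonneg (fun x => norm_nonneg _))
      (fun n => ?_) hmaj
    have hle : ∀ x ∈ Ioi (0 : ℝ), ‖F n x‖ ≤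
        ((n : ℝ) + a) * (x ^ s * Real.exp (-(((n : ℝ) + a) * x)))
          + x ^ (s - 1) * Real.exp (-(((n : ℝ) + a) * x)) := by
      intro x hx
      have hx0 : 0 < x := hx
      have h1 : 0 ≤ ((n : ℝ) + a) * (x ^ s * Real.exp (-(((n : ℝ) + a) * x))) := by positivity
      have h2 : 0 ≤ x ^ (s - 1) * Real.exp (-(((n : ℝ) + a) * x)) := by positivity
      calc ‖F n x‖ ≤ ‖((n : ℝ) + a) * (x ^ s * Real.exp (-(((n : ℝ) + a) * x)))‖
            + ‖x ^ (s - 1) * Real.exp (-(((n : ℝ) + a) * x))‖ := norm_sub_le _ _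
        _ = _ := by rw [Real.norm_of_nonneg h1, Real.norm_of_nonneg h2]
    calc (∫ x in Ioi (0 : ℝ), ‖F n x‖)
        ≤ ∫ x in Ioi (0 : ℝ), (((n : ℝ) + a) * (x ^ s * Real.exp (-(((n : ℝ) + a) * x)))
            + x ^ (s - 1) * Real.exp (-(((n : ℝ) + a) * x))) := by
          refine setIntegral_mono_on (hFint n).norm (((int1 n).const_mul _).add (int2 n))
            measurableSet_Ioi hle
      _ = ((n : ℝ) + a) ^ (-s) * (s * Real.Gamma s + Real.Gamma s) := by
          rw [integral_add ((int1 n).const_mul _) (int2 n), integral_const_mul, J1 n, J2 n,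
            ← mul_assoc, hpow1 n, hpow2 n, Real.Gamma_add_one hs0.ne']
          ring
  -- pointwise sum of the series
  have hpt : ∀ x ∈ Ioi (0 : ℝ), (∑' n : ℕ, F n x) =
      x ^ (s - 1) * Real.exp (-a * x) *
        (a * x - 1 + Real.exp (-x) * (1 - (a - 1) * x)) / (1 - Real.exp (-x)) ^ 2 := by
    intro x hx
    have hx0 : 0 < x := hx
    set r : ℝ := Real.exp (-x) with hr
    have hr0 : 0 ≤ r := (Real.exp_pos _).le
    have hr1 : r < 1 := by
      rw [hr, Real.exp_lt_one_iff]
      linarith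
    have hr1' : (1 : ℝ) - r ≠ 0 := by linarith
    have hE : ∀ n : ℕ, Real.exp (-(((n : ℝ) + a) * x)) = r ^ n * Real.exp (-(a * x)) := by
      intro n
      rw [hr, ← Real.exp_nat_mul, ← Real.exp_add]
      congr 1
      ring
    have h1 : HasSum (fun n : ℕ => (n : ℝ) * r ^ n) (r / (1 - r) ^ 2) :=
      hasSum_coe_mul_geometric_of_norm_lt_one (by rwa [Real.norm_eq_abs, abs_of_nonneg hr0])
    have h2 : HasSum (fun n : ℕ => r ^ n) (1 - r)⁻¹ := hasSum_geometric_of_lt_one hr0 hr1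
    have h3 : HasSum (fun n : ℕ => F n x)
        ((x ^ s * Real.exp (-(a * x))) * (r / (1 - r) ^ 2)
          + ((a * x ^ s - x ^ (s - 1)) * Real.exp (-(a * x))) * (1 - r)⁻¹) := by
      have := (h1.mul_left (x ^ s * Real.exp (-(a * x)))).add
        (h2.mul_left ((a * x ^ s - x ^ (s - 1)) * Real.exp (-(a * x))))
      refine this.congr_fun (fun n => ?_)
      rw [hF]
      simp only [hE n]
      ring
    rw [h3.tsum_eq]
    have hxs : x ^ s = x ^ (s - 1) * x := by
      rw [← Real.rpow_add_one hx0.ne' (s - 1), sub_add_cancel]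
    rw [hxs, neg_mul]
    field_simp
    ring
  -- put everything together
  have hkey : HasSum (fun n : ℕ => ∫ x in Ioi (0 : ℝ), F n x)
      (∫ x in Ioi (0 : ℝ), ∑' n : ℕ, F n x) :=
    hasSum_integral_of_summable_integral_norm hFint hnormsum
  have heq1 : (∫ x in Ioi (0 : ℝ), ∑' n : ℕ, F n x) =
      ∫ x in Ioi (0 : ℝ),
        x ^ (s - 1) * Real.exp (-a * x) *
          (a * x - 1 + Real.exp (-x) * (1 - (a - 1) * x)) / (1 - Real.exp (-x)) ^ 2 :=
    setIntegral_congr_fun measurableSet_Ioi hpt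
  rw [← heq1, ← hkey.tsum_eq, tsum_congr hInt, ← tsum_mul_left]
end

section
/- For a ≥ 1, the function h_a(x) = e^{-ax}·[ax - 1 + e^{-x}(1 - (a-1)x)]/(1 - e^{-x})² for x > 0 is a probability density on (0,∞): h_a ≥ 0 and ∫₀^∞ h_a(x) dx = 1. -/
open MeasureTheory Set

theorem stmt_8 (a : ℝ) (ha : 1 ≤ a) :
    (∀ x : ℝ, 0 < x →
        0 ≤ Real.exp (-a * x) * (a * x - 1 + Real.exp (-x) * (1 - (a - 1) * x)) /
          (1 - Real.exp (-x)) ^ 2) ∧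
      (∫ x in Ioi (0 : ℝ),
          Real.exp (-a * x) * (a * x - 1 + Real.exp (-x) * (1 - (a - 1) * x)) /
            (1 - Real.exp (-x)) ^ 2) = 1 := by
  set h : ℝ → ℝ := fun x =>
    Real.exp (-a * x) * (a * x - 1 + Real.exp (-x) * (1 - (a - 1) * x)) /
      (1 - Real.exp (-x)) ^ 2 with hh
  have hnonneg : ∀ x : ℝ, 0 < x → 0 ≤ h x := by
    intro x hx
    have h1 : -x + 1 ≤ Real.exp (-x) := Real.add_one_le_exp (-x)
    have h2 : Real.exp (-x) < 1 := by
      rw [Real.exp_lt_one_iff]; linarith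
    have hφ : 0 ≤ a * x - 1 + Real.exp (-x) * (1 - (a - 1) * x) := by
      nlinarith [mul_nonneg (sub_nonneg.2 ha) hx.le, mul_pos hx (sub_pos.2 h2)]
    exact div_nonneg (mul_nonneg (Real.exp_pos _).le hφ) (sq_nonneg _)
  refine ⟨hnonneg, ?_⟩
  set g : ℝ → ℝ := fun x =>
    if x = 0 then -1 else -(x * Real.exp (-a * x) / (1 - Real.exp (-x))) with hg
  have hne : ∀ x : ℝ, 0 < x → 1 - Real.exp (-x) ≠ 0 := by
    intro x hx
    have : Real.exp (-x) < 1 := by rw [Real.exp_lt_one_iff]; linarith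
    linarith
  -- derivative
  have hderiv : ∀ x ∈ Ioi (0 : ℝ), HasDerivAt g (h x) x := by
    intro x hx
    rw [mem_Ioi] at hx
    have hd1 : HasDerivAt (fun y : ℝ => y * Real.exp (-a * y))
        (1 * Real.exp (-a * x) + x * (Real.exp (-a * x) * (-a))) x := by
      have hinner : HasDerivAt (fun y : ℝ => -a * y) (-a) x := by
        simpa using (hasDerivAt_id x).const_mul (-a)
      exact (hasDerivAt_id x).mul ((Real.hasDerivAt_exp (-a * x)).comp x hinner)
    have hd2 : HasDerivAt (fun y : ℝ => 1 - Real.exp (-y)) (Real.exp (-x)) x := by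
      have : HasDerivAt (fun y : ℝ => Real.exp (-y)) (Real.exp (-x) * (-1)) x :=
        (Real.hasDerivAt_exp (-x)).comp x (by simpa using (hasDerivAt_neg x))
      simpa using this.const_sub (1:ℝ)
    have hd : HasDerivAt (fun y : ℝ => -(y * Real.exp (-a * y) / (1 - Real.exp (-y))))
        (-(((1 * Real.exp (-a * x) + x * (Real.exp (-a * x) * (-a))) * (1 - Real.exp (-x))
          - x * Real.exp (-a * x) * Real.exp (-x)) / (1 - Real.exp (-x)) ^ 2)) x :=
      (hd1.div hd2 (hne x hx)).neg
    have heq : g =ᶠ[nhds x] fun y => -(y * Real.exp (-a * y) / (1 - Real.exp (-y))) := by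
      filter_upwards [eventually_ne_nhds hx.ne'] with y hy
      simp [hg, hy]
    have := hd.congr_of_eventuallyEq heq
    convert this using 1
    have hne' := hne x hx
    · rfl
    · rfl
    simp only [hh]
    field_simp [hh]
    ring
  -- continuity at 0 within Ici 0
  have hcont : ContinuousWithinAt g (Ici (0:ℝ)) 0 := by
    rw [← continuousWithinAt_Ioi_iff_Ici]
    have hslope : Filter.Tendsto (fun x : ℝ => (1 - Real.exp (-x)) / x)
        (nhdsWithin 0 {(0:ℝ)}ᶜ) (nhds 1) := by
      have hd2 : HasDerivAt (fun y : ℝ => 1 - Real.exp (-y)) (Real.exp (-(0:ℝ))) 0 := by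
        have : HasDerivAt (fun y : ℝ => Real.exp (-y)) (Real.exp (-(0:ℝ)) * (-1)) 0 :=
          (Real.hasDerivAt_exp (-(0:ℝ))).comp 0 (by simpa using (hasDerivAt_neg (0:ℝ)))
        simpa using this.const_sub (1:ℝ)
      have := hasDerivAt_iff_tendsto_slope.1 hd2
      simp only [Real.exp_zero, neg_zero] at this
      refine this.congr fun y => ?_
      simp [slope_def_field, div_eq_div_iff]
    have hslope' : Filter.Tendsto (fun x : ℝ => (1 - Real.exp (-x)) / x)
        (nhdsWithin 0 (Ioi 0)) (nhds 1) :=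
      hslope.mono_left (nhdsWithin_mono _ (fun y hy => ne_of_gt hy))
    have hexp : Filter.Tendsto (fun x : ℝ => Real.exp (-a * x))
        (nhdsWithin 0 (Ioi 0)) (nhds 1) := by
      have : Continuous fun x : ℝ => Real.exp (-a * x) := by continuity
      simpa using (this.tendsto 0).mono_left nhdsWithin_le_nhds
    have htend : Filter.Tendsto g (nhdsWithin 0 (Ioi 0)) (nhds (-1)) := by
      have : Filter.Tendsto (fun x : ℝ => -(Real.exp (-a * x) / ((1 - Real.exp (-x)) / x)))
          (nhdsWithin 0 (Ioi 0)) (nhds (-(1/1))) := (hexp.div hslope' one_ne_zero).neg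
      simp only [one_div_one] at this
      refine this.congr' ?_
      filter_upwards [self_mem_nhdsWithin] with y hy
      rw [mem_Ioi] at hy
      rw [hg]
      simp only [hy.ne', if_false]
      rw [div_div_eq_mul_div]
      ring_nf
    unfold ContinuousWithinAt
    simpa [hg] using htend
  -- limit at infinity
  have hlim : Filter.Tendsto g Filter.atTop (nhds 0) := by
    have hx0 : Filter.Tendsto (fun x : ℝ => x * Real.exp (-a * x)) Filter.atTop (nhds 0) := by
      have hb := Real.tendsto_pow_mul_exp_neg_atTop_nhds_zero 1
      simp only [pow_one] at hb
      refine tendsto_of_tendsto_of_tendsto_of_le_of_le' tendsto_const_nhds hb ?_ ?_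
      · filter_upwards [Filter.eventually_ge_atTop (0:ℝ)] with x hx
        exact mul_nonneg hx (Real.exp_pos _).le
      · filter_upwards [Filter.eventually_ge_atTop (0:ℝ)] with x hx
        have : -a * x ≤ -x := by nlinarith
        exact mul_le_mul_of_nonneg_left (Real.exp_le_exp.2 this) hx
    have hden : Filter.Tendsto (fun x : ℝ => 1 - Real.exp (-x)) Filter.atTop (nhds 1) := by
      simpa using tendsto_const_nhds.sub Real.tendsto_exp_neg_atTop_nhds_zero
    have : Filter.Tendsto (fun x : ℝ => -(x * Real.exp (-a * x) / (1 - Real.exp (-x))))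
        Filter.atTop (nhds (-(0/1))) := (hx0.div hden one_ne_zero).neg
    simp only [zero_div, neg_zero] at this
    refine this.congr' ?_
    filter_upwards [Filter.eventually_gt_atTop (0:ℝ)] with x hx
    simp [hg, hx.ne']
  have := integral_Ioi_of_hasDerivAt_of_nonneg hcont hderiv
    (fun x hx => hnonneg x (mem_Ioi.1 hx)) hlim
  rw [this]
  simp [hg]
end

section
/- For real s > 2 and a > 0, Γ(s)·∑_{n=0}^∞ n/(n+a)^s = ∫₀^∞ x^{s-1} e^{-ax} e^{-x}/(1 - e^{-x})² dx. -/
open MeasureTheory Set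

theorem stmt_10 (s a : ℝ) (hs : 2 < s) (ha : 0 < a) :
    Real.Gamma s * (∑' n : ℕ, (n : ℝ) / ((n : ℝ) + a) ^ s) =
      ∫ x in Ioi (0 : ℝ),
        x ^ (s - 1) * Real.exp (-a * x) * Real.exp (-x) / (1 - Real.exp (-x)) ^ 2 := by
  have hs0 : (0:ℝ) < s := by linarith
  set F : ℕ → ℝ → ℝ := fun n x ↦ x ^ (s - 1) * ((n : ℝ) * Real.exp (-((n + a) * x))) with hF
  have hna : ∀ n : ℕ, (0:ℝ) < (n : ℝ) + a := fun n ↦ by positivity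
  -- integrability of each term
  have hF_int : ∀ n : ℕ, Integrable (F n) (volume.restrict (Ioi (0:ℝ))) := by
    intro n
    have h1 : IntegrableOn (fun x : ℝ ↦ x ^ (s-1) * Real.exp (-((n:ℝ)+a) * x ^ (1:ℝ)))
        (Ioi 0) := integrableOn_rpow_mul_exp_neg_mul_rpow (by linarith) zero_lt_one (hna n)
    have h2 : IntegrableOn (fun x : ℝ ↦ x ^ (s-1) * Real.exp (-(((n:ℝ)+a) * x))) (Ioi 0) := by
      refine h1.congr_fun (fun x _ ↦ ?_) measurableSet_Ioi
      beta_reduce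
      rw [Real.rpow_one, neg_mul]
    simpa [hF, mul_comm, mul_left_comm, mul_assoc] using (h2.const_mul (n:ℝ))
  -- the value of each integral
  have hval : ∀ n : ℕ, ∫ x in Ioi (0:ℝ), F n x = Real.Gamma s * ((n:ℝ) / ((n:ℝ)+a) ^ s) := by
    intro n
    have := Real.integral_rpow_mul_exp_neg_mul_Ioi hs0 (hna n)
    calc ∫ x in Ioi (0:ℝ), F n x
        = (n:ℝ) * ∫ x in Ioi (0:ℝ), x ^ (s-1) * Real.exp (-(((n:ℝ)+a) * x)) := by
          rw [← integral_const_mul]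
          exact setIntegral_congr_fun measurableSet_Ioi (fun x _ ↦ by simp only [hF]; ring_nf)
      _ = (n:ℝ) * ((1/((n:ℝ)+a)) ^ s * Real.Gamma s) := by rw [this]
      _ = Real.Gamma s * ((n:ℝ) / ((n:ℝ)+a) ^ s) := by
          rw [Real.div_rpow (by norm_num) (hna n).le, Real.one_rpow]
          ring
  -- nonnegativity, so norm integrals equal integrals
  have hFnonneg : ∀ n : ℕ, ∀ x ∈ Ioi (0:ℝ), 0 ≤ F n x := by
    intro n x hx
    have : (0:ℝ) < x := hx
    positivity
  have hnorm : ∀ n : ℕ, ∫ x in Ioi (0:ℝ), ‖F n x‖ = Real.Gamma s * ((n:ℝ) / ((n:ℝ)+a) ^ s) := by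
    intro n
    rw [← hval n]
    exact setIntegral_congr_fun measurableSet_Ioi
      (fun x hx ↦ Real.norm_of_nonneg (hFnonneg n x hx))
  -- summability of the series of integrals
  have hsum : Summable (fun n : ℕ ↦ (n:ℝ) / ((n:ℝ)+a) ^ s) := by
    have hbig : Summable (fun n : ℕ ↦ (n:ℝ) ^ (1 - s)) :=
      Real.summable_nat_rpow.mpr (by linarith)
    refine Summable.of_nonneg_of_le (fun n ↦ by positivity) (fun n ↦ ?_) hbig
    rcases Nat.eq_zero_or_pos n with rfl | hn
    · simp [Real.zero_rpow (by linarith : (1:ℝ) - s ≠ 0)]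
    have hn0 : (0:ℝ) < (n:ℝ) := by exact_mod_cast hn
    have h1 : (n:ℝ) ^ s ≤ ((n:ℝ) + a) ^ s :=
      Real.rpow_le_rpow hn0.le (by linarith) hs0.le
    calc (n:ℝ) / ((n:ℝ)+a) ^ s ≤ (n:ℝ) / (n:ℝ) ^ s := by
          apply div_le_div_of_nonneg_left hn0.le (Real.rpow_pos_of_pos hn0 s) h1
      _ = (n:ℝ) ^ (1 - s) := by
          rw [Real.rpow_sub hn0, Real.rpow_one, div_eq_mul_inv]
      _ ≤ (n:ℝ) ^ (1 - s) := le_rfl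
  have hsum' : Summable (fun n : ℕ ↦ ∫ x in Ioi (0:ℝ), ‖F n x‖) := by
    simp_rw [hnorm]
    exact hsum.mul_left _
  -- pointwise sum of the series
  have hpt : ∀ x ∈ Ioi (0:ℝ), (∑' n : ℕ, F n x)
      = x ^ (s - 1) * Real.exp (-a * x) * Real.exp (-x) / (1 - Real.exp (-x)) ^ 2 := by
    intro x hx
    have hx0 : (0:ℝ) < x := hx
    have hr : ‖Real.exp (-x)‖ < 1 := by
      rw [Real.norm_eq_abs, abs_of_pos (Real.exp_pos _)]
      exact Real.exp_lt_one_iff.mpr (by linarith)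
    have H : HasSum (fun n : ℕ ↦ (n:ℝ) * Real.exp (-x) ^ n)
        (Real.exp (-x) / (1 - Real.exp (-x)) ^ 2) :=
      hasSum_coe_mul_geometric_of_norm_lt_one hr
    have H2 := H.mul_left (x ^ (s - 1) * Real.exp (-a * x))
    have heq : (fun n : ℕ ↦ x ^ (s - 1) * Real.exp (-a * x) * ((n:ℝ) * Real.exp (-x) ^ n))
        = fun n : ℕ ↦ F n x := by
      funext n
      have : Real.exp (-x) ^ n = Real.exp (-((n:ℝ) * x)) := by
        rw [← Real.exp_nat_mul]; ring_nf
      rw [this, hF]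
      simp only []
      rw [show -(((n:ℝ) + a) * x) = (-((n:ℝ) * x)) + (-a * x) by ring, Real.exp_add]
      ring
    rw [heq] at H2
    rw [H2.tsum_eq]
    ring
  -- put it together
  have key := hasSum_integral_of_summable_integral_norm (μ := volume.restrict (Ioi (0:ℝ)))
      hF_int hsum'
  have htsum : ∑' n : ℕ, ∫ x in Ioi (0:ℝ), F n x
      = ∫ x in Ioi (0:ℝ), ∑' n : ℕ, F n x := key.tsum_eq
  calc Real.Gamma s * (∑' n : ℕ, (n : ℝ) / ((n : ℝ) + a) ^ s)
      = ∑' n : ℕ, Real.Gamma s * ((n : ℝ) / ((n : ℝ) + a) ^ s) := (tsum_mul_left).symm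
    _ = ∑' n : ℕ, ∫ x in Ioi (0:ℝ), F n x := by simp_rw [hval]
    _ = ∫ x in Ioi (0:ℝ), ∑' n : ℕ, F n x := htsum
    _ = ∫ x in Ioi (0:ℝ),
        x ^ (s - 1) * Real.exp (-a * x) * Real.exp (-x) / (1 - Real.exp (-x)) ^ 2 :=
        setIntegral_congr_fun measurableSet_Ioi hpt
end

section
/- Let X be a random variable on ℝ with symmetric distribution F and all absolute moments finite, and let φ_X(t) = E(e^{itX}) be its characteristic function. Then for all a > 0 and real s > 0, ∫₀^∞ t^{s-1} e^{-at} φ_X(t) dt = Γ(s)·E((a + iX)^{-s}). -/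
open MeasureTheory Set Complex

lemma stmt17_intA {s b : ℝ} (hs : -1 < s) (hb : 0 < b) :
    IntegrableOn (fun t : ℝ => t ^ s * Real.exp (-b * t)) (Ioi 0) := by
  have := integrableOn_rpow_mul_exp_neg_mul_rpow hs zero_lt_one hb
  simpa [Real.rpow_one] using this

lemma stmt17_measB (c : ℂ) (b : ℂ) :
    AEStronglyMeasurable (fun t : ℝ => (t : ℂ) ^ c * Complex.exp (-(b * t)))
      (volume.restrict (Ioi 0)) := by
  apply ContinuousOn.aestronglyMeasurable _ measurableSet_Ioi
  intro t ht
  apply ContinuousWithinAt.mul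
  · exact ((continuousAt_cpow_const (by simp [mem_Ioi.mp ht] : (t:ℂ) ∈ slitPlane)).comp
      continuous_ofReal.continuousAt).continuousWithinAt
  · exact (Complex.continuous_exp.comp (by continuity)).continuousWithinAt

lemma stmt17_normB {s : ℝ} {b : ℂ} {t : ℝ} (ht : 0 < t) :
    ‖(t : ℂ) ^ ((s : ℂ) - 1) * Complex.exp (-(b * t))‖ = t ^ (s-1) * Real.exp (-b.re * t) := by
  rw [norm_mul,
    Complex.norm_cpow_eq_rpow_re_of_pos ht, Complex.norm_exp]
  simp [neg_mul]

lemma stmt17_intB {s : ℝ} (hs : 0 < s) {b : ℂ} (hb : 0 < b.re) :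
    IntegrableOn (fun t : ℝ => (t : ℂ) ^ ((s : ℂ) - 1) * Complex.exp (-(b * t))) (Ioi 0) := by
  apply Integrable.mono' (stmt17_intA (by linarith : (-1:ℝ) < s - 1) hb) (stmt17_measB _ _)
  filter_upwards [ae_restrict_mem measurableSet_Ioi] with t ht
  rw [stmt17_normB (mem_Ioi.mp ht)]

lemma stmt17_diffF {s : ℝ} (hs : 0 < s) {b : ℂ} (hb : 0 < b.re) :
    HasDerivAt (fun z : ℂ => ∫ t in Ioi (0:ℝ), (t : ℂ) ^ ((s : ℂ) - 1) * Complex.exp (-(z * t)))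
      (∫ t in Ioi (0:ℝ), (t : ℂ) ^ ((s : ℂ) - 1) * (-(t:ℂ)) * Complex.exp (-(b * t))) b := by
  have hε : (0:ℝ) < b.re / 2 := by linarith
  have stmt17_key := hasDerivAt_integral_of_dominated_loc_of_deriv_le
    (F := fun z (t : ℝ) => (t : ℂ) ^ ((s : ℂ) - 1) * Complex.exp (-(z * t)))
    (F' := fun z (t : ℝ) => (t : ℂ) ^ ((s : ℂ) - 1) * (-(t:ℂ)) * Complex.exp (-(z * t)))
    (μ := volume.restrict (Ioi 0)) (x₀ := b)
    (bound := fun t : ℝ => t ^ s * Real.exp (-(b.re/2) * t)) (Metric.ball_mem_nhds b hε)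
    (Filter.Eventually.of_forall (fun z => stmt17_measB _ _)) (stmt17_intB hs hb) ?_ ?_
    (stmt17_intA (by linarith) hε) ?_
  · exact stmt17_key.2
  · have := (stmt17_measB ((s:ℂ) - 1 + 1) b)
    apply AEStronglyMeasurable.congr (this.const_mul (-1))
    filter_upwards [ae_restrict_mem measurableSet_Ioi] with t ht
    have : (t:ℂ) ^ ((s:ℂ) - 1 + 1) = (t:ℂ) ^ ((s:ℂ)-1) * (t:ℂ) := by
      rw [cpow_add _ _ (ofReal_ne_zero.mpr (mem_Ioi.mp ht).ne'), cpow_one]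
    rw [this]; ring
  · filter_upwards [ae_restrict_mem measurableSet_Ioi] with t ht z hz
    have ht' := mem_Ioi.mp ht
    simp only [norm_mul, norm_neg]
    rw [Complex.norm_cpow_eq_rpow_re_of_pos ht', Complex.norm_exp,
      Complex.norm_real, Real.norm_eq_abs, abs_of_pos ht']
    have hre : -( z * t).re ≤ -(b.re/2) * t := by
      have h1 : |(z - b).re| ≤ ‖z - b‖ := Complex.abs_re_le_norm _
      have h2 : ‖z - b‖ < b.re / 2 := by simpa [Metric.mem_ball, dist_eq_norm] using hz
      have h3 : b.re / 2 < z.re := by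
        have := abs_le.mp h1
        simp only [Complex.sub_re] at this
        linarith [this.1, h2]
      simp only [Complex.neg_re, Complex.mul_re, Complex.ofReal_re, Complex.ofReal_im,
        mul_zero, sub_zero]
      nlinarith
    calc t ^ ((s:ℂ)-1).re * t * Real.exp (-(z*t)).re
        ≤ t ^ ((s:ℂ)-1).re * t * Real.exp (-(b.re/2) * t) := by
          apply mul_le_mul_of_nonneg_left (Real.exp_le_exp.mpr hre)
          positivity
      _ = t ^ s * Real.exp (-(b.re/2) * t) := by
          congr 1
          simp only [Complex.sub_re, Complex.ofReal_re, Complex.one_re]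
          rw [← Real.rpow_add_one ht'.ne' (s-1)]
          ring_nf
  · filter_upwards [ae_restrict_mem measurableSet_Ioi] with t ht z hz
    have h1 : HasDerivAt (fun y : ℂ => -(y * t)) (-(t:ℂ)) z := by
      exact (((hasDerivAt_id z).mul_const (t:ℂ)).neg).congr_deriv (by simp)
    have h2 := (Complex.hasDerivAt_exp (-(z * t))).comp z h1
    have h3 := h2.const_mul ((t:ℂ) ^ ((s:ℂ) - 1))
    refine h3.congr_deriv ?_
    ring

lemma stmt17_key {s : ℝ} (hs : 0 < s) {b : ℂ} (hb : 0 < b.re) :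
    (∫ t in Ioi (0:ℝ), (t : ℂ) ^ ((s : ℂ) - 1) * Complex.exp (-(b * t))) =
      (Real.Gamma s : ℂ) * b ^ (-(s : ℂ)) := by
  set U : Set ℂ := {z | 0 < z.re} with hU
  have hUopen : IsOpen U := isOpen_lt continuous_const Complex.continuous_re
  have hF : AnalyticOnNhd ℂ
      (fun z : ℂ => ∫ t in Ioi (0:ℝ), (t : ℂ) ^ ((s : ℂ) - 1) * Complex.exp (-(z * t))) U := by
    apply DifferentiableOn.analyticOnNhd _ hUopen
    intro z hz
    exact ((stmt17_diffF hs hz).differentiableAt).differentiableWithinAt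
  have hG : AnalyticOnNhd ℂ (fun z : ℂ => (Real.Gamma s : ℂ) * z ^ (-(s:ℂ))) U := by
    apply analyticOnNhd_const.mul
    apply AnalyticOnNhd.cpow analyticOnNhd_id analyticOnNhd_const
    intro z hz
    exact Or.inl hz
  have hpre : IsPreconnected U := (convex_halfSpace_re_gt 0).isPreconnected
  have h1U : (1:ℂ) ∈ U := by simp [hU]
  have hreal : ∀ r : ℝ, 0 < r →
      (∫ t in Ioi (0:ℝ), (t : ℂ) ^ ((s : ℂ) - 1) * Complex.exp (-((r:ℂ) * t))) =
        (Real.Gamma s : ℂ) * (r:ℂ) ^ (-(s : ℂ)) := by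
    intro r hr
    have h := integral_cpow_mul_exp_neg_mul_Ioi (a := (s:ℂ)) (by simpa using hs) hr
    rw [h, one_div,
      inv_cpow _ _ (by simp [Complex.arg_ofReal_of_nonneg hr.le, Real.pi_ne_zero.symm]),
      ← cpow_neg, Complex.Gamma_ofReal, mul_comm]
  have hfreq : ∃ᶠ z in nhdsWithin (1:ℂ) {(1:ℂ)}ᶜ,
      (∫ t in Ioi (0:ℝ), (t : ℂ) ^ ((s : ℂ) - 1) * Complex.exp (-(z * t))) =
        (Real.Gamma s : ℂ) * z ^ (-(s:ℂ)) := by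
    have htend : Filter.Tendsto (fun n : ℕ => ((1 + 1/(n+1) : ℝ) : ℂ)) Filter.atTop
        (nhdsWithin (1:ℂ) {(1:ℂ)}ᶜ) := by
      apply tendsto_nhdsWithin_of_tendsto_nhds_of_eventually_within
      · have : Filter.Tendsto (fun n : ℕ => (1 + 1/(n+1) : ℝ)) Filter.atTop (nhds 1) := by
          have := tendsto_one_div_add_atTop_nhds_zero_nat (𝕜 := ℝ)
          simpa using (tendsto_const_nhds.add this)
        have h4 := (Complex.continuous_ofReal.tendsto 1).comp this
        simp only [Function.comp_def] at h4
        convert h4 using 2 with n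
        simp
      · apply Filter.Eventually.of_forall
        intro n
        simp only [mem_compl_iff, mem_singleton_iff]
        intro h
        have : (1 + 1/(n+1) : ℝ) = 1 := by exact_mod_cast h
        have hn : (0:ℝ) < 1/(n+1) := by positivity
        linarith
    apply htend.frequently
    apply Filter.Frequently.of_forall
    intro n
    exact hreal _ (by positivity)
  have := hF.eqOn_of_preconnected_of_frequently_eq hG hpre h1U hfreq
  exact this hb

theorem stmt_17 (μ : Measure ℝ) [IsProbabilityMeasure μ]
    (hsymm : μ.map (fun x : ℝ => -x) = μ)
    (hmom : ∀ n : ℕ, Integrable (fun x : ℝ => |x| ^ n) μ)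
    (a s : ℝ) (ha : 0 < a) (hs : 0 < s) :
    (∫ t in Ioi (0 : ℝ), ((t ^ (s - 1) * Real.exp (-a * t) : ℝ) : ℂ) *
        ∫ x : ℝ, Complex.exp ((t : ℂ) * x * Complex.I) ∂μ) =
      (Real.Gamma s : ℂ) * ∫ x : ℝ, ((a : ℂ) + (x : ℂ) * Complex.I) ^ (-(s : ℂ)) ∂μ := by
  set G : ℝ → ℝ → ℂ := fun t x => ((t ^ (s - 1) * Real.exp (-a * t) : ℝ) : ℂ) *
      Complex.exp ((t : ℂ) * x * Complex.I) with hG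
  -- continuity / measurability of uncurry G
  have hcont : ContinuousOn (Function.uncurry G) (Ioi (0:ℝ) ×ˢ (univ : Set ℝ)) := by
    intro p hp
    have hp1 : (0:ℝ) < p.1 := hp.1
    apply ContinuousAt.continuousWithinAt
    apply ContinuousAt.mul
    · apply Complex.continuous_ofReal.continuousAt.comp
      exact (((Real.continuousAt_rpow_const p.1 (s-1) (Or.inl hp1.ne')).comp
        continuous_fst.continuousAt).mul
        ((Real.continuous_exp.comp (by continuity)).continuousAt))
    · exact (Complex.continuous_exp.comp (by continuity)).continuousAt
  have hmeasG : AEStronglyMeasurable (Function.uncurry G)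
      ((volume.restrict (Ioi (0:ℝ))).prod μ) := by
    rw [Measure.restrict_prod_eq_prod_univ]
    exact hcont.aestronglyMeasurable (measurableSet_Ioi.prod MeasurableSet.univ)
  have hnormG : ∀ t x : ℝ, ‖G t x‖ = |t ^ (s-1) * Real.exp (-a * t)| := by
    intro t x
    rw [hG, norm_mul, Complex.norm_real, Real.norm_eq_abs,
      Complex.norm_exp]
    have : ((t : ℂ) * x * Complex.I).re = 0 := by simp
    rw [this, Real.exp_zero, mul_one]
  -- integrability on the product
  have hint : Integrable (Function.uncurry G) ((volume.restrict (Ioi (0:ℝ))).prod μ) := by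
    rw [integrable_prod_iff hmeasG]
    constructor
    · filter_upwards [ae_restrict_mem measurableSet_Ioi] with t ht
      apply (integrable_const (|t ^ (s-1) * Real.exp (-a * t)|)).mono'
      · have hc : Continuous (fun x : ℝ => G t x) := by
          simp only [hG]
          exact continuous_const.mul (Complex.continuous_exp.comp
            ((continuous_const.mul Complex.continuous_ofReal).mul continuous_const))
        exact hc.aestronglyMeasurable
      · filter_upwards with x
        exact le_of_eq (hnormG t x)
    · apply Integrable.congr (stmt17_intA (by linarith : (-1:ℝ) < s - 1) ha)
      filter_upwards [ae_restrict_mem measurableSet_Ioi] with t ht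
      have : ∀ x : ℝ, ‖G t x‖ = t ^ (s-1) * Real.exp (-a * t) := by
        intro x
        rw [hnormG t x, _root_.abs_of_nonneg]
        exact mul_nonneg (Real.rpow_nonneg (le_of_lt (mem_Ioi.mp ht)) _) (Real.exp_nonneg _)
      simp [Function.uncurry_apply_pair, this]
  -- rewrite LHS as double integral and swap
  have hswap : (∫ t in Ioi (0:ℝ), ((t ^ (s - 1) * Real.exp (-a * t) : ℝ) : ℂ) *
        ∫ x : ℝ, Complex.exp ((t : ℂ) * x * Complex.I) ∂μ) =
      ∫ x : ℝ, ∫ t in Ioi (0:ℝ), G t x ∂volume ∂μ := by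
    rw [← integral_integral_swap hint]
    apply setIntegral_congr_fun measurableSet_Ioi
    intro t _
    simp only [hG]
    exact (integral_const_mul _ _).symm
  rw [hswap]
  -- evaluate the inner integral
  have hinner : ∀ x : ℝ, (∫ t in Ioi (0:ℝ), G t x ∂volume) =
      (Real.Gamma s : ℂ) * ((a:ℂ) - (x:ℂ) * Complex.I) ^ (-(s:ℂ)) := by
    intro x
    have hb : (0:ℝ) < ((a:ℂ) - (x:ℂ) * Complex.I).re := by simpa using ha
    rw [← stmt17_key hs hb]
    apply setIntegral_congr_fun measurableSet_Ioi
    intro t ht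
    have ht' : (0:ℝ) < t := ht
    rw [hG]
    simp only
    rw [Complex.ofReal_mul, Complex.ofReal_cpow ht'.le, Complex.ofReal_exp, mul_assoc,
      ← Complex.exp_add]
    push_cast
    ring_nf
  simp only [hinner]
  rw [integral_const_mul]
  congr 1
  -- symmetry
  conv_rhs => rw [← hsymm]
  have hcont2 : Continuous (fun x : ℝ => ((a:ℂ) + (x:ℂ) * Complex.I) ^ (-(s:ℂ))) := by
    rw [continuous_iff_continuousAt]
    intro x
    apply (continuousAt_cpow_const _).comp
      (continuous_const.add (Complex.continuous_ofReal.mul continuous_const)).continuousAt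
    exact Or.inl (by simpa using ha)
  rw [integral_map measurable_neg.aemeasurable
    (hcont2.aestronglyMeasurable.mono_measure le_rfl)]
  apply integral_congr_ae
  filter_upwards with x
  push_cast
  ring_nf
end
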